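/- arXiv:1303.2760 — 3 statements merged into one kernel-verified Lean document; each statement's English description precedes it below -/
import Mathlib

section
/- Suppose the pair (A, B) with A = [[A11, A12],[A21, A22]] and B = [B1; B2] is controllable, i.e., [λI - A, B] has full row rank n for all complex λ. Then for any (n-p)×p matrix K, the pencil [[λI - A11, -A12, B1, -I_p],[-A21, λI - A22, B2, K]] has full row rank n for every complex λ. -/
open Matrix

lemma col_submatrix_rank_le {m n₁ n₂ : Type*} [Fintype m] [Fintype n₁] [Fintype n₂]
    [DecidableEq n₂] (M : Matrix m n₂ ℂ) (f : n₁ → n₂) :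
    (M.submatrix id f).rank ≤ M.rank := by
  have h : M.submatrix id f = M * Matrix.of (fun c i => if f i = c then (1:ℂ) else 0) := by
    ext j i
    simp [Matrix.mul_apply, eq_comm]
  rw [h]
  exact Matrix.rank_mul_le_left _ _

theorem stmt_7 (p q m : ℕ)
    (A11 : Matrix (Fin p) (Fin p) ℂ) (A12 : Matrix (Fin p) (Fin q) ℂ)
    (A21 : Matrix (Fin q) (Fin p) ℂ) (A22 : Matrix (Fin q) (Fin q) ℂ)
    (B1 : Matrix (Fin p) (Fin m) ℂ) (B2 : Matrix (Fin q) (Fin m) ℂ)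
    (hctrb : ∀ l : ℂ,
      (Matrix.fromCols
        (l • (1 : Matrix (Fin p ⊕ Fin q) (Fin p ⊕ Fin q) ℂ) -
          fromBlocks A11 A12 A21 A22)
        (Matrix.fromRows B1 B2)).rank = p + q)
    (K : Matrix (Fin q) (Fin p) ℂ) :
    ∀ l : ℂ,
      (Matrix.fromCols
        (fromBlocks (l • (1 : Matrix (Fin p) (Fin p) ℂ) - A11) (-A12)
          (-A21) (l • (1 : Matrix (Fin q) (Fin q) ℂ) - A22))
        (fromBlocks B1 (-(1 : Matrix (Fin p) (Fin p) ℂ)) B2 K)).rank = p + q := by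
  intro l
  set D := (Matrix.fromCols
        (fromBlocks (l • (1 : Matrix (Fin p) (Fin p) ℂ) - A11) (-A12)
          (-A21) (l • (1 : Matrix (Fin q) (Fin q) ℂ) - A22))
        (fromBlocks B1 (-(1 : Matrix (Fin p) (Fin p) ℂ)) B2 K)) with hD
  have hsub : (Matrix.fromCols
        (l • (1 : Matrix (Fin p ⊕ Fin q) (Fin p ⊕ Fin q) ℂ) -
          fromBlocks A11 A12 A21 A22)
        (Matrix.fromRows B1 B2)) = D.submatrix id (Sum.map id Sum.inl) := by
    ext i j
    rcases i with i | i <;> rcases j with (j | j) | j <;>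
      simp [hD, Matrix.one_apply, sub_eq_add_neg]
  apply le_antisymm
  · have := D.rank_le_card_height
    simpa using this
  · rw [← hctrb l, hsub]
    exact col_submatrix_rank_le _ _
end

section
/- Suppose (A, B) is controllable with A = [[A11, A12],[A21, A22]], B = [B1; B2]. Then for every complex λ, the matrix [[A11 - λI, A12, B1, 0],[A21, A22 - λI, B2, 0],[λ I_p, 0, 0, I_p]] has full row rank n + p. -/
open Matrix

lemma aux_rank_eq_card_iff {k n : Type*} [Fintype k] [Fintype n]
    (M : Matrix k n ℂ) :
    M.rank = Fintype.card k ↔ Function.Surjective M.mulVec := by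
  have hs : Function.Surjective M.mulVec ↔ LinearMap.range M.mulVecLin = ⊤ := by
    rw [LinearMap.range_eq_top]; exact Iff.rfl
  rw [Matrix.rank, hs]
  constructor
  · intro h
    apply Submodule.eq_top_of_finrank_eq
    rw [h, Module.finrank_fintype_fun_eq_card]
  · intro h
    rw [h, finrank_top, Module.finrank_fintype_fun_eq_card]

theorem stmt_8 (p q m : ℕ)
    (A11 : Matrix (Fin p) (Fin p) ℂ) (A12 : Matrix (Fin p) (Fin q) ℂ)
    (A21 : Matrix (Fin q) (Fin p) ℂ) (A22 : Matrix (Fin q) (Fin q) ℂ)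
    (B1 : Matrix (Fin p) (Fin m) ℂ) (B2 : Matrix (Fin q) (Fin m) ℂ)
    (hctrb : ∀ l : ℂ,
      (Matrix.fromCols
        (l • (1 : Matrix (Fin p ⊕ Fin q) (Fin p ⊕ Fin q) ℂ) -
          fromBlocks A11 A12 A21 A22)
        (Matrix.fromRows B1 B2)).rank = p + q) :
    ∀ l : ℂ,
      (Matrix.fromRows
        (Matrix.fromCols
          (fromBlocks (A11 - l • (1 : Matrix (Fin p) (Fin p) ℂ)) A12
            A21 (A22 - l • (1 : Matrix (Fin q) (Fin q) ℂ)))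
          (fromBlocks B1 0 B2 0))
        (Matrix.fromCols
          (Matrix.fromCols (l • (1 : Matrix (Fin p) (Fin p) ℂ)) 0)
          (Matrix.fromCols 0 (1 : Matrix (Fin p) (Fin p) ℂ)))).rank
        = p + q + p := by
  intro l
  have hc := hctrb l
  rw [show p + q = Fintype.card (Fin p ⊕ Fin q) by simp] at hc
  rw [aux_rank_eq_card_iff] at hc
  have key : (Matrix.fromRows
        (Matrix.fromCols
          (fromBlocks (A11 - l • (1 : Matrix (Fin p) (Fin p) ℂ)) A12
            A21 (A22 - l • (1 : Matrix (Fin q) (Fin q) ℂ)))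
          (fromBlocks B1 0 B2 0))
        (Matrix.fromCols
          (Matrix.fromCols (l • (1 : Matrix (Fin p) (Fin p) ℂ)) 0)
          (Matrix.fromCols 0 (1 : Matrix (Fin p) (Fin p) ℂ)))).rank
        = Fintype.card ((Fin p ⊕ Fin q) ⊕ Fin p) := by
    rw [aux_rank_eq_card_iff]
    intro y
    obtain ⟨v, hv⟩ := hc (y ∘ Sum.inl)
    have hv' : (l • (1 : Matrix (Fin p ⊕ Fin q) (Fin p ⊕ Fin q) ℂ) -
          fromBlocks A11 A12 A21 A22) *ᵥ (v ∘ Sum.inl) +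
          (Matrix.fromRows B1 B2) *ᵥ (v ∘ Sum.inr) = y ∘ Sum.inl := by
      rw [← fromCols_mulVec_sumElim]
      rwa [show Sum.elim (v ∘ Sum.inl) (v ∘ Sum.inr) = v by
        funext i; cases i <;> rfl]
    set x1 : (Fin p ⊕ Fin q) → ℂ := -(v ∘ Sum.inl) with hx1
    set u : Fin m → ℂ := v ∘ Sum.inr with hu
    refine ⟨Sum.elim x1 (Sum.elim u (fun i => y (Sum.inr i) - l * x1 (Sum.inl i))), ?_⟩
    funext i
    rw [fromRows_mulVec]
    cases i with
    | inl i =>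
      simp only [Sum.elim_inl]
      rw [fromCols_mulVec_sumElim]
      have hA : fromBlocks (A11 - l • (1 : Matrix (Fin p) (Fin p) ℂ)) A12
            A21 (A22 - l • (1 : Matrix (Fin q) (Fin q) ℂ))
          = fromBlocks A11 A12 A21 A22 -
            l • (1 : Matrix (Fin p ⊕ Fin q) (Fin p ⊕ Fin q) ℂ) := by
        rw [← fromBlocks_one, Matrix.fromBlocks_smul]
        ext i j
        cases i <;> cases j <;> simp
      have h2 : (fromBlocks B1 (0 : Matrix (Fin p) (Fin p) ℂ)
            B2 (0 : Matrix (Fin q) (Fin p) ℂ)) *ᵥ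
          (Sum.elim u (fun i => y (Sum.inr i) - l * x1 (Sum.inl i)))
          = (Matrix.fromRows B1 B2) *ᵥ u := by
        rw [fromBlocks_mulVec, fromRows_mulVec]
        simp
      have h3 : (fromBlocks A11 A12 A21 A22 -
            l • (1 : Matrix (Fin p ⊕ Fin q) (Fin p ⊕ Fin q) ℂ)) *ᵥ x1
          = (l • (1 : Matrix (Fin p ⊕ Fin q) (Fin p ⊕ Fin q) ℂ) -
            fromBlocks A11 A12 A21 A22) *ᵥ (v ∘ Sum.inl) := by
        rw [hx1, Matrix.mulVec_neg, ← Matrix.neg_mulVec, neg_sub]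
      rw [hA]
      have : (fromBlocks A11 A12 A21 A22 -
            l • (1 : Matrix (Fin p ⊕ Fin q) (Fin p ⊕ Fin q) ℂ)) *ᵥ x1 +
          (fromBlocks B1 0 B2 0) *ᵥ
            (Sum.elim u (fun i => y (Sum.inr i) - l * x1 (Sum.inl i)))
          = y ∘ Sum.inl := by
        rw [h2, h3]; exact hv'
      exact congrFun this i
    | inr i =>
      simp only [Sum.elim_inr]
      rw [fromCols_mulVec_sumElim,
        show x1 = Sum.elim (x1 ∘ Sum.inl) (x1 ∘ Sum.inr) by
          funext j; cases j <;> rfl,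
        fromCols_mulVec_sumElim, fromCols_mulVec_sumElim]
      simp [Matrix.smul_mulVec]
  rw [key]; simp
end

section
/- Let A⁺ = [[A11 + F1, -A12],[-(A21 + F2), A22]] and suppose V = [V1; V2] spans a p-dimensional invariant subspace of A⁺ (so A⁺ V = V Λ for some p×p matrix Λ) with V1 invertible. Then K := V2 V1^{-1} satisfies the Riccati equation K(A11 + F1) - A22 K - K A12 K + (A21 + F2) = 0, and A11 + F1 - A12 K = V1 Λ V1^{-1}; in particular if Λ has all eigenvalues in the open left half plane then K is a stabilizing solution. -/
open Matrix

theorem stmt_10 (p q : ℕ)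
    (A11 F1 Λ V1 : Matrix (Fin p) (Fin p) ℂ) (A12 : Matrix (Fin p) (Fin q) ℂ)
    (A21 F2 V2 : Matrix (Fin q) (Fin p) ℂ) (A22 : Matrix (Fin q) (Fin q) ℂ)
    (Aplus : Matrix (Fin p ⊕ Fin q) (Fin p ⊕ Fin q) ℂ)
    (hAplus : Aplus = fromBlocks (A11 + F1) (-A12) (-(A21 + F2)) A22)
    (hinv : Aplus * Matrix.fromRows V1 V2 = Matrix.fromRows V1 V2 * Λ)
    (hV1 : IsUnit V1)
    (K : Matrix (Fin q) (Fin p) ℂ) (hK : K = V2 * V1⁻¹) :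
    K * (A11 + F1) - A22 * K - K * A12 * K + (A21 + F2) = 0 ∧
    A11 + F1 - A12 * K = V1 * Λ * V1⁻¹ ∧
    ((∀ μ ∈ spectrum ℂ Λ, μ.re < 0) →
      ∀ μ ∈ spectrum ℂ (A11 + F1 - A12 * K), μ.re < 0) := by
  have hdet : IsUnit V1.det := (isUnit_iff_isUnit_det V1).mp hV1
  have hVV : V1 * V1⁻¹ = 1 := mul_nonsing_inv V1 hdet
  have hVV' : V1⁻¹ * V1 = 1 := nonsing_inv_mul V1 hdet
  rw [hAplus, fromBlocks_mul_fromRows, fromRows_mul, fromRows_ext_iff] at hinv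
  obtain ⟨h1, h2⟩ := hinv
  have hKV : K * V1 = V2 := by
    rw [hK, Matrix.mul_assoc, hVV', Matrix.mul_one]
  have hmain : A11 + F1 - A12 * K = V1 * Λ * V1⁻¹ := by
    have h3 : ((A11 + F1) * V1 + -A12 * V2) * V1⁻¹ = V1 * Λ * V1⁻¹ := by rw [h1]
    rw [Matrix.add_mul, Matrix.mul_assoc (A11 + F1), hVV, Matrix.mul_one,
      Matrix.mul_assoc (-A12), ← hK, Matrix.neg_mul] at h3
    rw [← h3]; abel
  refine ⟨?_, hmain, ?_⟩
  · have hA22K : A22 * K = V2 * Λ * V1⁻¹ + (A21 + F2) := by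
      have h4 : (-(A21 + F2) * V1 + A22 * V2) * V1⁻¹ = V2 * Λ * V1⁻¹ := by rw [h2]
      rw [Matrix.add_mul, Matrix.neg_mul, Matrix.neg_mul, Matrix.mul_assoc (A21 + F2), hVV,
        Matrix.mul_one, Matrix.mul_assoc A22, ← hK] at h4
      rw [← h4]; abel
    have hKmain : K * (A11 + F1) - K * (A12 * K) = K * (V1 * Λ * V1⁻¹) := by
      rw [← Matrix.mul_sub, hmain]
    have hKV2 : K * (V1 * Λ * V1⁻¹) = V2 * Λ * V1⁻¹ := by
      rw [← Matrix.mul_assoc, ← Matrix.mul_assoc, hKV]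
    rw [hKV2, ← Matrix.mul_assoc] at hKmain
    rw [hA22K]
    rw [sub_eq_iff_eq_add] at hKmain
    rw [hKmain]; abel
  · intro hΛ μ hμ
    rw [hmain, ← hV1.unit_spec, ← coe_units_inv, spectrum.units_conjugate] at hμ
    exact hΛ μ hμ
end
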